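/- Let n ≥ 1 and let A_0, A_1, ..., A_n be elements of a unital complex Banach algebra B, and set A(z) = z_0A_0 + z_1A_1 + ⋯ + z_nA_n for z ∈ ℂ^{n+1}. Then the set P = {z ∈ ℂ^{n+1} : A(z) is not invertible in B} contains a nonzero vector, is closed in ℂ^{n+1}, and is invariant under multiplication by nonzero complex scalars; consequently the projective spectrum p(A), the image of P \ {0} in complex projective space ℙ^n, is a nonempty compact subset of ℙ^n (equivalently, P ∩ {z : ‖z‖ = 1} is nonempty and compact). -/

import Mathlib

/-- For elements `A₀, ..., Aₙ` (`n ≥ 1`) of a unital complex Banach algebra, the set `P` of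
points `z ∈ ℂⁿ⁺¹` where the pencil `A(z) = z₀A₀ + ⋯ + zₙAₙ` is not invertible contains a
nonzero vector, is closed, and is invariant under multiplication by nonzero scalars; hence the
projective spectrum is nonempty and compact (equivalently, `P ∩ {‖z‖ = 1}` is nonempty and
compact). -/
theorem stmt2 {B : Type*} [NormedRing B] [NormedAlgebra ℂ B] [CompleteSpace B] [Nontrivial B]
    (n : ℕ) (hn : 1 ≤ n) (A : Fin (n + 1) → B)
    (P : Set (EuclideanSpace ℂ (Fin (n + 1))))
    (hP : P = {z : EuclideanSpace ℂ (Fin (n + 1)) | ¬ IsUnit (∑ i, z i • A i)}) :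
    (∃ z ∈ P, z ≠ 0) ∧ IsClosed P ∧
      (∀ c : ℂ, c ≠ 0 → ∀ z ∈ P, c • z ∈ P) ∧
      (P ∩ Metric.sphere (0 : EuclideanSpace ℂ (Fin (n + 1))) 1).Nonempty ∧
      IsCompact (P ∩ Metric.sphere (0 : EuclideanSpace ℂ (Fin (n + 1))) 1) := by
  have h01 : (0 : Fin (n + 1)) ≠ 1 := by
    obtain ⟨m, rfl⟩ := Nat.exists_eq_add_of_le' hn
    exact Fin.zero_ne_one
  -- smul invariance of non-units
  have hsmul : ∀ (c : ℂ), c ≠ 0 → ∀ x : B, IsUnit (c • x) ↔ IsUnit x := by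
    intro c hc x
    have hcu : IsUnit c := hc.isUnit
    have := isUnit_smul_iff hcu.unit x
    rwa [Units.smul_def, hcu.unit_spec] at this
  have key : ∀ (c : ℂ) (z : EuclideanSpace ℂ (Fin (n+1))),
      (∑ i, (c • z) i • A i) = c • ∑ i, z i • A i := by
    intro c z
    rw [Finset.smul_sum]
    refine Finset.sum_congr rfl fun i _ => ?_
    show (c * z i) • A i = c • (z i • A i)
    rw [smul_smul]
  -- existence of a nonzero point
  have hex : ∃ z, z ∈ P ∧ z ≠ 0 := by
    by_cases hA0 : IsUnit (A 0)
    · obtain ⟨μ, hμ⟩ := spectrum.nonempty ((↑hA0.unit⁻¹ : B) * A 1)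
      set z : EuclideanSpace ℂ (Fin (n+1)) :=
        WithLp.toLp 2 (fun i => if i = 0 then -μ else if i = 1 then 1 else 0) with hz
      refine ⟨z, ?_, ?_⟩
      · have hsum : (∑ i, z i • A i) = (-μ) • A 0 + A 1 := by
          have : ∀ i : Fin (n+1), z i • A i =
              (if i = (0 : Fin (n+1)) then (-μ) • A 0 else 0) +
              (if i = (1 : Fin (n+1)) then A 1 else 0) := by
            intro i
            by_cases h0 : i = 0
            · subst h0; simp [hz, h01, Ne.symm h01]
            · by_cases h1 : i = 1
              · subst h1; simp [hz, h01, Ne.symm h01]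
              · simp [hz, h0, h1]
          rw [hP] at *
          simp only [this, Finset.sum_add_distrib, Finset.sum_ite_eq',
            Finset.mem_univ, if_true]
        rw [hP]
        simp only [Set.mem_setOf_eq, hsum]
        intro hu
        have hne : ¬ IsUnit (algebraMap ℂ B μ - (↑hA0.unit⁻¹ : B) * A 1) :=
          spectrum.mem_iff.mp hμ
        apply hne
        have hid : algebraMap ℂ B μ - (↑hA0.unit⁻¹ : B) * A 1 =
            -((↑hA0.unit⁻¹ : B) * (-μ • A 0 + A 1)) := by
          rw [mul_add, mul_smul_comm, Units.inv_mul_of_eq hA0.unit_spec,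
            Algebra.algebraMap_eq_smul_one]
          rw [neg_smul]; abel
        rw [hid]
        exact ((hA0.unit⁻¹.isUnit).mul hu).neg
      · intro h
        have := congrArg (fun v : EuclideanSpace ℂ (Fin (n+1)) => v 1) h
        simp [hz, Ne.symm h01] at this
    · refine ⟨EuclideanSpace.single 0 1, ?_, ?_⟩
      · rw [hP]
        simp only [Set.mem_setOf_eq]
        have hsum : (∑ i, (EuclideanSpace.single (0 : Fin (n+1)) (1:ℂ)) i • A i) = A 0 := by
          rw [Finset.sum_eq_single 0]
          · simp
          · intro b _ hb; simp [EuclideanSpace.single_apply, hb]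
          · simp
        rw [hsum]; exact hA0
      · intro h
        have := congrArg (fun v : EuclideanSpace ℂ (Fin (n+1)) => v 0) h
        simp [EuclideanSpace.single_apply] at this
  have hcont : Continuous fun z : EuclideanSpace ℂ (Fin (n+1)) => ∑ i, z i • A i := by
    apply continuous_finset_sum
    intro i _
    exact Continuous.smul (by fun_prop) continuous_const
  have hclosed : IsClosed P := by
    rw [hP]
    have : {z : EuclideanSpace ℂ (Fin (n+1)) | ¬ IsUnit (∑ i, z i • A i)} =
        (fun z : EuclideanSpace ℂ (Fin (n+1)) => ∑ i, z i • A i) ⁻¹' {x : B | IsUnit x}ᶜ := rfl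
    rw [this]
    exact (Units.isOpen.isClosed_compl).preimage hcont
  have hinv : ∀ c : ℂ, c ≠ 0 → ∀ z ∈ P, c • z ∈ P := by
    intro c hc z hz
    rw [hP] at *
    simp only [Set.mem_setOf_eq] at *
    rw [key c z, hsmul c hc]
    exact hz
  obtain ⟨z, hzP, hz0⟩ := hex
  have hnorm : ‖z‖ ≠ 0 := by simpa using hz0
  set w : EuclideanSpace ℂ (Fin (n+1)) := ((‖z‖⁻¹ : ℝ) : ℂ) • z with hw
  have hwP : w ∈ P := hinv _ (by simp [hnorm]) z hzP
  have hwS : w ∈ Metric.sphere (0 : EuclideanSpace ℂ (Fin (n+1))) 1 := by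
    rw [mem_sphere_zero_iff_norm, hw, norm_smul]
    simp [norm_inv, inv_mul_cancel₀ hnorm]
  refine ⟨⟨z, hzP, hz0⟩, hclosed, hinv, ⟨w, hwP, hwS⟩, ?_⟩
  exact (isCompact_sphere (0 : EuclideanSpace ℂ (Fin (n+1))) 1).inter_left hclosed
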